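/- In the setting of the previous item, the orthogonal projection of X^h onto the orthogonal complement T^⊥ of T in V ⊕ so equals −ξ_{L⁻¹X} − (ξ·ξ_{L⁻¹X})^h, and the orthogonal projection of α ∈ so onto T^⊥ equals α_m + ξ_{L⁻¹(ξ·α_m)} + (L⁻¹(ξ·α_m))^h. -/

import Mathlib

/-- Pointwise linear algebra of Proposition 4 (normal part): in `V ⊕ so` with
`T = {(Y, ξ Y + γ) : Y ∈ V, γ ∈ mᗮ}`, the orthogonal projection of `X^h = (X,0)` onto
`T^⊥` is `−ξ_{L⁻¹X} − (ξd ξ_{L⁻¹X})^h = (−ξd(ξ(L⁻¹X)), −ξ(L⁻¹X))`, and the orthogonal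
projection of `(0,α)` onto `T^⊥` is
`α_m + ξ_{L⁻¹(ξd α_m)} + (L⁻¹(ξd α_m))^h = (L⁻¹(ξd α_m), α_m + ξ(L⁻¹(ξd α_m)))`.
A vector `w` is the orthogonal projection of `p` onto `T^⊥` iff `w ⊥ T` and `p − w ∈ T`. -/
theorem stmt12 (V so : Type*) [NormedAddCommGroup V] [InnerProductSpace ℝ V]
    [NormedAddCommGroup so] [InnerProductSpace ℝ so]
    (m : Submodule ℝ so)
    (ξ : V →ₗ[ℝ] so) (hξm : ∀ X, ξ X ∈ m)
    (ξd : so →ₗ[ℝ] V) (hξd : ∀ (α : so) (X : V), (inner ℝ (ξd α) X : ℝ) = - inner ℝ α (ξ X))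
    (Linv : V →ₗ[ℝ] V)
    (hLinv1 : ∀ X : V, Linv X - ξd (ξ (Linv X)) = X)
    (hLinv2 : ∀ X : V, Linv (X - ξd (ξ X)) = X) :
    (∀ X : V,
      (∀ (Y : V) (γ : so), γ ∈ mᗮ →
        (inner ℝ (-(ξd (ξ (Linv X)))) Y : ℝ) + inner ℝ (-(ξ (Linv X))) (ξ Y + γ) = 0) ∧
      (∃ (Y : V) (γ : so), γ ∈ mᗮ ∧
        ((X - (-(ξd (ξ (Linv X)))), (0 : so) - (-(ξ (Linv X)))) : V × so) = (Y, ξ Y + γ))) ∧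
    (∀ (α αg αm : so), αg ∈ mᗮ → αm ∈ m → α = αg + αm →
      (∀ (Y : V) (γ : so), γ ∈ mᗮ →
        (inner ℝ (Linv (ξd αm)) Y : ℝ) + inner ℝ (αm + ξ (Linv (ξd αm))) (ξ Y + γ) = 0) ∧
      (∃ (Y : V) (γ : so), γ ∈ mᗮ ∧
        (((0 : V) - Linv (ξd αm), α - (αm + ξ (Linv (ξd αm)))) : V × so) = (Y, ξ Y + γ))) := by
  constructor
  · intro X
    constructor
    · intro Y γ hγ
      have h0 : (inner ℝ (ξ (Linv X)) γ : ℝ) = 0 := hγ _ (hξm _)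
      have h1 := hξd (ξ (Linv X)) Y
      simp only [inner_neg_left, inner_add_right, h0]
      linarith
    · refine ⟨Linv X, 0, Submodule.zero_mem _, ?_⟩
      have h := hLinv1 X
      simp only [Prod.mk.injEq]
      refine ⟨?_, by simp⟩
      rw [sub_neg_eq_add, eq_comm, ← sub_eq_iff_eq_add]; exact h
  · intro α αg αm hαg hαm hα
    constructor
    · intro Y γ hγ
      set Z := Linv (ξd αm) with hZ
      have h0 : (inner ℝ (ξ Z) γ : ℝ) = 0 := hγ _ (hξm _)
      have h0' : (inner ℝ αm γ : ℝ) = 0 := hγ _ hαm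
      have h1 : (inner ℝ αm (ξ Y) : ℝ) = - inner ℝ (ξd αm) Y := by
        have := hξd αm Y; linarith
      have h2 : (inner ℝ (ξ Z) (ξ Y) : ℝ) = - inner ℝ (ξd (ξ Z)) Y := by
        have := hξd (ξ Z) Y; linarith
      have h3 : Z - ξd (ξ Z) = ξd αm := hLinv1 (ξd αm)
      have h4 : (inner ℝ (Z - ξd (ξ Z)) Y : ℝ) = inner ℝ (ξd αm) Y := by rw [h3]
      rw [inner_sub_left] at h4
      simp only [inner_add_left, inner_add_right, h0, h0', h1, h2]
      linarith
    · refine ⟨-(Linv (ξd αm)), αg, hαg, ?_⟩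
      simp only [Prod.mk.injEq, map_neg]
      exact ⟨by abel, by rw [hα]; abel⟩
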